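/- For every odd prime p, w(p,p) = (1/p)·C(2p, p−1) ≡ 2(1−p) (mod p²). -/

import Mathlib

open Finset

lemma central_binom_sq (p : ℕ) (hp : p.Prime) :
    ((p : ℤ))^2 ∣ ((2 * p).choose p : ℤ) - 2 := by
  have h1 : (2 * p).choose p = ∑ ij ∈ Finset.HasAntidiagonal.antidiagonal p,
      p.choose ij.1 * p.choose ij.2 := by
    rw [two_mul]; exact Nat.add_choose_eq p p p
  have h2 : (2 * p).choose p = ∑ i ∈ Finset.range (p + 1),
      p.choose i * p.choose (p - i) := by
    rw [h1, Finset.Nat.sum_antidiagonal_eq_sum_range_succ_mk]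
  have hp1 : 1 ≤ p := hp.one_lt.le.trans' (by norm_num)
  have hps : p = (p - 1) + 1 := (Nat.succ_pred_eq_of_pos hp.pos).symm
  have h3 : ((2 * p).choose p : ℤ) = ∑ i ∈ Finset.range (p + 1),
      (p.choose i : ℤ) * (p.choose (p - i) : ℤ) := by
    rw [h2]; push_cast; ring
  rw [h3, Finset.sum_range_succ]
  rw [show Finset.range p = Finset.range ((p-1)+1) from by rw [← hps]]
  rw [Finset.sum_range_succ']
  simp only [Nat.choose_zero_right, Nat.choose_self, Nat.sub_zero, Nat.sub_self,
    Nat.cast_one, one_mul, mul_one]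
  have : (∑ i ∈ Finset.range (p - 1), (p.choose (i+1) : ℤ) * (p.choose (p - (i+1)) : ℤ))
      + 1 + 1 - 2 = ∑ i ∈ Finset.range (p - 1), (p.choose (i+1) : ℤ) * (p.choose (p - (i+1)) : ℤ) := by
    ring
  rw [this]
  apply Finset.dvd_sum
  intro i hi
  have hi' : i < p - 1 := Finset.mem_range.mp hi
  have h1p : i + 1 < p := by omega
  have h2p : p - (i+1) < p := by omega
  have h1ne : i + 1 ≠ 0 := by omega
  have h2ne : p - (i+1) ≠ 0 := by omega
  have d1 : p ∣ p.choose (i+1) := hp.dvd_choose_self h1ne h1p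
  have d2 : p ∣ p.choose (p - (i+1)) := hp.dvd_choose_self h2ne h2p
  rw [sq]
  exact mul_dvd_mul (Int.natCast_dvd_natCast.mpr d1) (Int.natCast_dvd_natCast.mpr d2)

theorem w_p_p_congr (p : ℕ) (hp : p.Prime) (hp2 : p ≠ 2) (w : ℤ)
    (hw : (p : ℤ) * w = ((2 * p).choose (p - 1) : ℤ)) :
    w ≡ 2 * (1 - (p : ℤ)) [ZMOD (p : ℤ)^2] := by
  have hp1 : 1 ≤ p := hp.one_lt.le.trans' (by norm_num)
  -- relation: C(2p,p) * p = C(2p,p-1) * (p+1)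
  have hrel : (2*p).choose p * p = (2*p).choose (p-1) * (p + 1) := by
    have := Nat.choose_succ_right_eq (2*p) (p-1)
    have h1 : (p - 1) + 1 = p := by omega
    have h2 : 2*p - (p-1) = p + 1 := by omega
    rw [h1, h2] at this
    exact this
  have hrelZ : ((2*p).choose p : ℤ) * p = ((p : ℤ) * w) * (p + 1) := by
    rw [hw]; exact_mod_cast congrArg (fun n : ℕ => (n : ℤ)) hrel
  have hp0 : (p : ℤ) ≠ 0 := by exact_mod_cast hp.pos.ne'
  have hkey : ((2*p).choose p : ℤ) = (1 + (p:ℤ)) * w := by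
    apply mul_right_cancel₀ hp0
    rw [hrelZ]; ring
  have hdvd : ((p : ℤ))^2 ∣ ((2 * p).choose p : ℤ) - 2 := central_binom_sq p hp
  rw [hkey] at hdvd
  have hco : IsCoprime ((p:ℤ)^2) (1 + (p:ℤ)) :=
    IsCoprime.pow_left (⟨-1, 1, by ring⟩ : IsCoprime (p:ℤ) (1 + (p:ℤ)))
  have hdvd2 : ((p:ℤ))^2 ∣ (1 + (p:ℤ)) * (2 * (1 - (p:ℤ)) - w) := by
    have : (1 + (p:ℤ)) * (2 * (1 - (p:ℤ)) - w) =
        -((1 + (p:ℤ)) * w - 2) - 2 * (p:ℤ)^2 := by ring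
    rw [this]
    exact dvd_sub (dvd_neg.mpr hdvd) ⟨2, by ring⟩
  have := hco.dvd_of_dvd_mul_left hdvd2
  exact (Int.modEq_iff_dvd.mpr this)
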